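/- Let A and G be Q-projective resolutions of R = Q/I and of an R-module M, with A∞-structures m and m^G. The degree-zero map φ = s·m_2^G restricted to A_{≥1}[1] ⊗ G_0 → G_{≥1}[1] is a morphism of complexes (where A_{≥1}[1] ⊗ G_0 carries differential m_1 ⊗ 1), and there is a quasi-isomorphism cone(φ)[−2] → Syz^R(M) := ker(R ⊗ G_0 → M); hence cone(φ)[−2] is a Q-projective resolution of the first R-syzygy of M. -/

import Mathlib

open scoped DirectSum TensorProduct
open Function LinearMap

namespace Golod

structure Cx (Q : Type) [CommRing Q] : Type 1 where
  X : ℕ → Type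
  [acg : ∀ i, AddCommGroup (X i)]
  [mod : ∀ i, Module Q (X i)]
  d : ∀ i, X (i + 1) →ₗ[Q] X i

attribute [instance] Cx.acg Cx.mod

variable {Q : Type} [CommRing Q]

/-- The positive part `A_{≥1}`, reindexed so that index `i` holds `A_{i+1}`. -/
abbrev Cx.plus (C : Cx Q) : Type := ⨁ i : ℕ, C.X (i + 1)

/-- The total module of a complex. -/
abbrev Cx.total (C : Cx Q) : Type := ⨁ i : ℕ, C.X i

def Cx.incl (C : Cx Q) (i : ℕ) : C.X (i + 1) →ₗ[Q] C.plus :=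
  DirectSum.lof Q ℕ (fun j => C.X (j + 1)) i

def Cx.inclT (C : Cx Q) (i : ℕ) : C.X i →ₗ[Q] C.total :=
  DirectSum.lof Q ℕ (fun j => C.X j) i

def Cx.IsComplex (C : Cx Q) : Prop := ∀ i, (C.d i).comp (C.d (i + 1)) = 0

def Cx.IsRes (C : Cx Q) (M : Type) [AddCommGroup M] [Module Q M]
    (ε : C.X 0 →ₗ[Q] M) : Prop :=
  C.IsComplex ∧ Surjective ε ∧ range (C.d 0) = ker ε ∧
    ∀ i, range (C.d (i + 1)) = ker (C.d i)

def Cx.IsProjRes (C : Cx Q) (M : Type) [AddCommGroup M] [Module Q M]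
    (ε : C.X 0 →ₗ[Q] M) : Prop :=
  C.IsRes M ε ∧ ∀ i, Module.Projective Q (C.X i)

/-- Minimality of a complex over a local ring with maximal ideal `𝔫`. -/
def Cx.Min (C : Cx Q) (𝔫 : Ideal Q) : Prop :=
  ∀ i x, C.d i x ∈ 𝔫 • (⊤ : Submodule Q (C.X i))

/-- The curvature term `d_1^A : A_1 → A_0 = Q`, viewed on all of `A_{≥1}`. -/
def Cx.d1 (C : Cx Q) (e0 : C.X 0 ≃ₗ[Q] Q) : ∀ i, C.X (i + 1) → Q
  | 0, x => e0 (C.d 0 x)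
  | _ + 1, _ => 0

/-- The data of a family of multilinear "higher multiplication" maps on `A_{≥1}[1]`. -/
def AAlgStr (C : Cx Q) : Type :=
  ∀ n : ℕ, MultilinearMap Q (fun _ : Fin n => C.plus) C.plus

/-- The data of a family of multilinear "higher action" maps, `mG k` corresponding to
`m_{k+1}^G : (A_{≥1}[1])^{⊗ k} ⊗ G → G`. -/
def AModStr (C : Cx Q) (G : Cx Q) : Type :=
  ∀ k : ℕ, MultilinearMap Q (fun _ : Fin k => C.plus) (G.total →ₗ[Q] G.total)

/-- The curved Stasheff relations making `(m_n)` an A∞-algebra structure on a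
`Q`-projective resolution `A` of `R = Q/I` with `A_0 = Q` (via `e0`). -/
def IsAInfAlg (C : Cx Q) (e0 : C.X 0 ≃ₗ[Q] Q) (m : AAlgStr C) : Prop :=
  -- each `m_n` has degree `-1` on `A_{≥1}[1]`
  (∀ n : ℕ, 0 < n → ∀ (a : ℕ → ℕ) (x : ∀ l, C.X (a l + 1)),
      m n (fun j : Fin n => C.incl (a j) (x j)) ∈
        Set.range (C.incl ((∑ l ∈ Finset.range n, a l) + 2 * n - 3)))
  -- `m_1 = d^{A[1]}` restricted to `A_{≥1}[1]`
  ∧ (∀ (i : ℕ) (x : C.X (i + 2)), m 1 (fun _ => C.incl (i + 1) x) = - C.incl i (C.d (i + 1) x))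
  ∧ (∀ x : C.X 1, m 1 (fun _ => C.incl 0 x) = 0)
  -- the curved relation `m₁m₂ + m₂(m₁⊗1 + 1⊗m₁) = d₁ ⊗ 1 - 1 ⊗ d₁`
  ∧ (∀ (a : ℕ → ℕ) (x : ∀ l, C.X (a l + 1)),
      m 1 (fun _ => m 2 ![C.incl (a 0) (x 0), C.incl (a 1) (x 1)])
        + m 2 ![m 1 (fun _ => C.incl (a 0) (x 0)), C.incl (a 1) (x 1)]
        + ((-1 : ℤ) ^ (a 0)) • m 2 ![C.incl (a 0) (x 0), m 1 (fun _ => C.incl (a 1) (x 1))]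
      = C.d1 e0 (a 0) (x 0) • C.incl (a 1) (x 1)
        - C.d1 e0 (a 1) (x 1) • C.incl (a 0) (x 0))
  -- the Stasheff relations for `n ≥ 3`
  ∧ (∀ n : ℕ, 3 ≤ n → ∀ (a : ℕ → ℕ) (x : ∀ l, C.X (a l + 1)),
      (∑ i ∈ Finset.Icc 1 n, ∑ j ∈ Finset.range (n - i + 1),
        ((-1 : ℤ) ^ (∑ l ∈ Finset.range j, a l)) •
          m (n - i + 1) (fun k : Fin (n - i + 1) =>
            if (k : ℕ) < j then C.incl (a k) (x k)
            else if (k : ℕ) = j then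
              m i (fun l : Fin i => C.incl (a (j + (l : ℕ))) (x (j + (l : ℕ))))
            else C.incl (a ((k : ℕ) + i - 1)) (x ((k : ℕ) + i - 1)))) = 0)

/-- The curved Stasheff relations making `(m_n^G)` an A∞ `A`-module structure on a
`Q`-projective resolution `G` of the `R`-module `M`; `mG k` is `m_{k+1}^G`. -/
def IsAInfMod (C : Cx Q) (e0 : C.X 0 ≃ₗ[Q] Q) (m : AAlgStr C) (G : Cx Q)
    (mG : AModStr C G) : Prop :=
  -- degree `-1`
  (∀ (k : ℕ) (a : ℕ → ℕ) (x : ∀ l, C.X (a l + 1)) (g : ℕ) (y : G.X g),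
      mG k (fun j : Fin k => C.incl (a j) (x j)) (G.inclT g y) ∈
        Set.range (G.inclT ((∑ l ∈ Finset.range k, a l) + 2 * k + g - 1)))
  -- `m_1^G = d^G`
  ∧ (∀ (i : ℕ) (y : G.X (i + 1)), mG 0 ![] (G.inclT (i + 1) y) = G.inclT i (G.d i y))
  ∧ (∀ y : G.X 0, mG 0 ![] (G.inclT 0 y) = 0)
  -- `m₁^G m₂^G + m₂^G(m₁ ⊗ 1 + 1 ⊗ m₁^G) = d₁^A ⊗ 1`
  ∧ (∀ (a : ℕ → ℕ) (x : ∀ l, C.X (a l + 1)) (g : ℕ) (y : G.X g),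
      mG 0 ![] (mG 1 ![C.incl (a 0) (x 0)] (G.inclT g y))
        + mG 1 ![m 1 (fun _ => C.incl (a 0) (x 0))] (G.inclT g y)
        + ((-1 : ℤ) ^ (a 0)) • mG 1 ![C.incl (a 0) (x 0)] (mG 0 ![] (G.inclT g y))
      = C.d1 e0 (a 0) (x 0) • G.inclT g y)
  -- the module Stasheff relations for `n ≥ 3`
  ∧ (∀ n : ℕ, 3 ≤ n → ∀ (a : ℕ → ℕ) (x : ∀ l, C.X (a l + 1)) (g : ℕ) (y : G.X g),
      (∑ i ∈ Finset.Icc 1 n,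
        ((∑ j ∈ Finset.range (n - i),
          ((-1 : ℤ) ^ (∑ l ∈ Finset.range j, a l)) •
            mG (n - i) (fun k : Fin (n - i) =>
              if (k : ℕ) < j then C.incl (a k) (x k)
              else if (k : ℕ) = j then
                m i (fun l : Fin i => C.incl (a (j + (l : ℕ))) (x (j + (l : ℕ))))
              else C.incl (a ((k : ℕ) + i - 1)) (x ((k : ℕ) + i - 1)))
              (G.inclT g y))
          + ((-1 : ℤ) ^ (∑ l ∈ Finset.range (n - i), a l)) •
            mG (n - i) (fun k : Fin (n - i) => C.incl (a k) (x k))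
              ((mG (i - 1) (fun l : Fin (i - 1) =>
                  C.incl (a (n - i + (l : ℕ))) (x (n - i + (l : ℕ)))))
                (G.inclT g y)))) = 0)

/-- Minimality of an A∞-algebra structure: `m_n ⊗ k = 0` for all `n ≥ 2`. -/
def AAlgStr.Min {C : Cx Q} (m : AAlgStr C) (𝔫 : Ideal Q) : Prop :=
  ∀ n, 2 ≤ n → ∀ v, m n v ∈ 𝔫 • (⊤ : Submodule Q C.plus)

/-- Minimality of an A∞-module structure: `m_n^G ⊗ k = 0` for all `n ≥ 2`. -/
def AModStr.Min {C G : Cx Q} (mG : AModStr C G) (𝔫 : Ideal Q) : Prop :=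
  ∀ k, 1 ≤ k → ∀ v y, mG k v y ∈ 𝔫 • (⊤ : Submodule Q G.total)


section Syzygy

variable {Q : Type} [CommRing Q]

/-- Projection onto the component `A_{i+1}` of `A_{≥1}`. -/
def compP (C : Cx Q) (i : ℕ) : C.plus →ₗ[Q] C.X (i + 1) :=
  DirectSum.component Q ℕ (fun j => C.X (j + 1)) i

/-- Projection onto the component `G_i` of the total module. -/
def compT (G : Cx Q) (i : ℕ) : G.total →ₗ[Q] G.X i :=
  DirectSum.component Q ℕ (fun j => G.X j) i

/-- `m₂^G` as a linear map `A_{≥1}[1] → End(G)`. -/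
noncomputable def m2lin (C G : Cx Q) (mG : AModStr C G) :
    C.plus →ₗ[Q] (G.total →ₗ[Q] G.total) :=
  (MultilinearMap.ofSubsingleton Q C.plus (G.total →ₗ[Q] G.total) (0 : Fin 1)).symm (mG 1)

/-- The bilinear map `A_{j+1} → G_0 → G_{j+1}` given by `(x, g) ↦ m₂^G(x ⊗ g)`;
this is the degree-`(j+1)` component of `φ = s m₂^G`. -/
noncomputable def smB (C G : Cx Q) (mG : AModStr C G) (j : ℕ) :
    C.X (j + 1) →ₗ[Q] (G.X 0 →ₗ[Q] G.X (j + 1)) :=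
  ((LinearMap.llcomp Q (G.X 0) G.total (G.X (j + 1)) (compT G (j + 1))).comp
      (LinearMap.lcomp Q G.total (G.inclT 0))).comp
    ((m2lin C G mG).comp (C.incl j))

/-- The underlying graded module of the syzygy complex `cone(φ)[-2]`:
`Syz(G)_0 = G_1` and `Syz(G)_{j+1} = (A_{j+1} ⊗ G_0) ⊕ G_{j+2}`. -/
def syzX (C G : Cx Q) : ℕ → Type
  | 0 => G.X 1
  | j + 1 => (C.X (j + 1) ⊗[Q] G.X 0) × G.X (j + 2)

noncomputable def syzXacg (C G : Cx Q) : ∀ n, AddCommGroup (syzX C G n)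
  | 0 => inferInstanceAs (AddCommGroup (G.X 1))
  | j + 1 => inferInstanceAs (AddCommGroup ((C.X (j + 1) ⊗[Q] G.X 0) × G.X (j + 2)))

noncomputable instance (C G : Cx Q) (n : ℕ) : AddCommGroup (syzX C G n) := syzXacg C G n

noncomputable def syzXmod (C G : Cx Q) : ∀ n, Module Q (syzX C G n)
  | 0 => inferInstanceAs (Module Q (G.X 1))
  | j + 1 => inferInstanceAs (Module Q ((C.X (j + 1) ⊗[Q] G.X 0) × G.X (j + 2)))

noncomputable instance (C G : Cx Q) (n : ℕ) : Module Q (syzX C G n) := syzXmod C G n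

/-- The differential of the syzygy complex `cone(φ)[-2]`. -/
noncomputable def syzD (C G : Cx Q) (mG : AModStr C G) :
    ∀ n, syzX C G (n + 1) →ₗ[Q] syzX C G n
  | 0 =>
      (TensorProduct.lift (smB C G mG 0)).comp (LinearMap.fst Q _ _)
        - (G.d 1).comp (LinearMap.snd Q _ _)
  | j + 1 =>
      LinearMap.prod
        ((TensorProduct.map (C.d (j + 1)) LinearMap.id).comp (LinearMap.fst Q _ _))
        ((TensorProduct.lift (smB C G mG (j + 1))).comp (LinearMap.fst Q _ _)
          - (G.d (j + 2)).comp (LinearMap.snd Q _ _))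

/-- The syzygy complex `Syz(G) = cone(φ)[-2]` of `G`, built from the
A∞ `A`-module structure on `G`. -/
noncomputable def SyzCx (C G : Cx Q) (mG : AModStr C G) : Cx Q where
  X := syzX C G
  d := syzD C G mG

end Syzygy


section Aux

variable {Q : Type} [CommRing Q] {C G : Cx Q} {mA : AAlgStr C} {mG : AModStr C G}

lemma mG1_eq (mG : AModStr C G) (w : C.plus) : mG 1 ![w] = m2lin C G mG w := by
  have h : ![w] = fun _ : Fin 1 => w := funext fun i => Matrix.cons_val_fin_one w ![] i
  rw [h]; rfl

lemma smB_apply (mG : AModStr C G) (j : ℕ) (x : C.X (j+1)) (g : G.X 0) :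
    smB C G mG j x g = compT G (j+1) (m2lin C G mG (C.incl j x) (G.inclT 0 g)) := rfl

lemma compT_inclT (G : Cx Q) (i : ℕ) (y : G.X i) : compT G i (G.inclT i y) = y := by
  simpa [compT, Cx.inclT] using DirectSum.component.lof_self Q i y

lemma key1
    (hdeg : ∀ (k : ℕ) (a : ℕ → ℕ) (x : ∀ l, C.X (a l + 1)) (g : ℕ) (y : G.X g),
      mG k (fun j : Fin k => C.incl (a j) (x j)) (G.inclT g y) ∈
        Set.range (G.inclT ((∑ l ∈ Finset.range k, a l) + 2 * k + g - 1)))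
    (j : ℕ) (x : C.X (j+1)) (g : G.X 0) :
    m2lin C G mG (C.incl j x) (G.inclT 0 g) = G.inclT (j+1) (smB C G mG j x g) := by
  have h := hdeg 1 (fun _ => j) (fun _ => x) 0 g
  rw [show (∑ _l ∈ Finset.range 1, j) + 2 * 1 + 0 - 1 = j + 1 by simp] at h
  obtain ⟨z, hz⟩ := h
  have hz' : m2lin C G mG (C.incl j x) (G.inclT 0 g) = G.inclT (j+1) z := hz.symm
  have hsz : smB C G mG j x g = z := by
    rw [smB_apply, hz', compT_inclT]
  rw [hsz, hz']

lemma mG0_apply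
    (h2 : ∀ (i : ℕ) (y : G.X (i + 1)), mG 0 ![] (G.inclT (i + 1) y) = G.inclT i (G.d i y))
    (i : ℕ) (y : G.X (i+1)) :
    mG 0 ![] (G.inclT (i+1) y) = G.inclT i (G.d i y) := h2 i y

lemma chain_map (e0 : C.X 0 ≃ₗ[Q] Q) (hmA : IsAInfAlg C e0 mA)
    (hmG : IsAInfMod C e0 mA G mG) (j : ℕ) (x : C.X (j+2)) (g : G.X 0) :
    G.d (j+1) (smB C G mG (j+1) x g) = smB C G mG j (C.d (j+1) x) g := by
  obtain ⟨hdeg, h2, h3, h4, -⟩ := hmG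
  have rel := h4 (fun _ => j+1) (fun _ => x) 0 g
  rw [hmA.2.1 j x, h3 g] at rel
  simp only [mG1_eq] at rel
  rw [map_neg (m2lin C G mG)] at rel
  simp only [LinearMap.neg_apply, map_zero, smul_zero, add_zero] at rel
  rw [key1 hdeg (j+1) x g, key1 hdeg j (C.d (j+1) x) g, h2 (j+1)] at rel
  have h0 : C.d1 e0 (j+1) x = 0 := rfl
  rw [h0, zero_smul] at rel
  have := congrArg (compT G (j+1)) rel
  simp only [map_add, map_neg, compT_inclT, map_zero] at this
  exact sub_eq_zero.mp (by simpa [sub_eq_add_neg] using this)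

lemma star_eq (e0 : C.X 0 ≃ₗ[Q] Q) (hmA : IsAInfAlg C e0 mA)
    (hmG : IsAInfMod C e0 mA G mG) (x : C.X 1) (g : G.X 0) :
    G.d 0 (smB C G mG 0 x g) = e0 (C.d 0 x) • g := by
  obtain ⟨hdeg, h2, h3, h4, -⟩ := hmG
  have rel := h4 (fun _ => 0) (fun _ => x) 0 g
  rw [hmA.2.2.1 x, h3 g] at rel
  simp only [mG1_eq] at rel
  rw [map_zero (m2lin C G mG)] at rel
  simp only [LinearMap.zero_apply, map_zero, smul_zero, add_zero] at rel
  rw [key1 hdeg 0 x g, h2 0] at rel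
  have h0 : C.d1 e0 0 x = e0 (C.d 0 x) := rfl
  rw [h0] at rel
  have := congrArg (compT G 0) rel
  simp only [compT_inclT, map_smul] at this
  exact this

end Aux

section Aux2

variable {Q : Type} [CommRing Q] {C G : Cx Q} {mA : AAlgStr C} {mG : AModStr C G}

lemma dPhiSucc (e0 : C.X 0 ≃ₗ[Q] Q) (hmA : IsAInfAlg C e0 mA)
    (hmG : IsAInfMod C e0 mA G mG) (j : ℕ) (t : C.X (j+2) ⊗[Q] G.X 0) :
    G.d (j+1) (TensorProduct.lift (smB C G mG (j+1)) t)
      = TensorProduct.lift (smB C G mG j) ((C.d (j+1)).rTensor (G.X 0) t) := by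
  induction t using TensorProduct.induction_on with
  | zero => simp
  | tmul x g =>
      simp only [TensorProduct.lift.tmul, LinearMap.rTensor_tmul, LinearMap.id_coe, id_eq]
      exact chain_map e0 hmA hmG j x g
  | add a b ha hb => simp [map_add, ha, hb]

lemma dPhi0 (e0 : C.X 0 ≃ₗ[Q] Q) (hmA : IsAInfAlg C e0 mA)
    (hmG : IsAInfMod C e0 mA G mG) (t : C.X 1 ⊗[Q] G.X 0) :
    G.d 0 (TensorProduct.lift (smB C G mG 0) t)
      = TensorProduct.lid Q (G.X 0)
          ((((e0 : C.X 0 →ₗ[Q] Q) ∘ₗ C.d 0).rTensor (G.X 0)) t) := by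
  induction t using TensorProduct.induction_on with
  | zero => simp
  | tmul x g =>
      simp only [TensorProduct.lift.tmul, LinearMap.rTensor_tmul, LinearMap.coe_comp,
        Function.comp_apply, LinearEquiv.coe_coe, TensorProduct.lid_tmul]
      exact star_eq e0 hmA hmG x g
  | add a b ha hb => simp [map_add, ha, hb]

end Aux2

set_option maxHeartbeats 1000000 in
/-- The map `φ = s m₂^G : A_{≥1}[1] ⊗ G_0 → G_{≥1}[1]` is a
morphism of complexes, and `cone(φ)[-2]` is a `Q`-projective resolution of the
first syzygy `Syz^R(M) = ker(R ⊗ G_0 → M)`. -/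
theorem syzygy_complex_resolves_syzygy (Q : Type) [CommRing Q] (I : Ideal Q)
    (M : Type) [AddCommGroup M] [Module (Q ⧸ I) M] [Module Q M]
    [IsScalarTower Q (Q ⧸ I) M]
    (C : Cx Q) (e0 : C.X 0 ≃ₗ[Q] Q) (ε : C.X 0 →ₗ[Q] Q ⧸ I)
    (hcompat : ∀ x, ε x = Ideal.Quotient.mk I (e0 x))
    (hres : C.IsProjRes (Q ⧸ I) ε)
    (mA : AAlgStr C) (hmA : IsAInfAlg C e0 mA)
    (G : Cx Q) (εG : G.X 0 →ₗ[Q] M) (hG : G.IsProjRes M εG)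
    (mG : AModStr C G) (hmG : IsAInfMod C e0 mA G mG) :
    -- `φ` is a morphism of complexes
    (∀ (j : ℕ) (x : C.X (j + 2)) (g : G.X 0),
        G.d (j + 1) (smB C G mG (j + 1) x g) = smB C G mG j (C.d (j + 1) x) g)
    -- and `cone(φ)[-2]` is a `Q`-projective resolution of `Syz^R(M)`
    ∧ (∃ εS : (SyzCx C G mG).X 0 →ₗ[Q]
          ↥(LinearMap.ker (εG.liftBaseChange (Q ⧸ I))),
        (∀ y : G.X 1,
          ((εS y : (Q ⧸ I) ⊗[Q] G.X 0)) = (1 : Q ⧸ I) ⊗ₜ[Q] (G.d 0 y))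
        ∧ (SyzCx C G mG).IsRes ↥(LinearMap.ker (εG.liftBaseChange (Q ⧸ I))) εS
        ∧ ∀ n, Module.Projective Q (syzX C G n)) := by
  haveI hP0 : Module.Projective Q (G.X 0) := hG.2 0
  obtain ⟨⟨hCc, hCsurj, hC0, hCpos⟩, hCproj⟩ := hres
  obtain ⟨⟨hGc, hGsurj, hG0, hGpos⟩, hGproj⟩ := hG
  have hchain : ∀ (j : ℕ) (x : C.X (j + 2)) (g : G.X 0),
      G.d (j + 1) (smB C G mG (j + 1) x g) = smB C G mG j (C.d (j + 1) x) g :=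
    fun j x g => chain_map e0 hmA hmG j x g
  refine ⟨hchain, ?_⟩
  have hGdd : ∀ (i : ℕ) (y : G.X (i+2)), G.d i (G.d (i+1) y) = 0 := by
    intro i y
    have := LinearMap.ext_iff.mp (hGc i) y
    simpa using this
  have hker : ∀ y : G.X 1,
      (1 : Q ⧸ I) ⊗ₜ[Q] (G.d 0 y) ∈ LinearMap.ker (εG.liftBaseChange (Q ⧸ I)) := by
    intro y
    have h1 : εG (G.d 0 y) = 0 := by
      have : G.d 0 y ∈ LinearMap.ker εG := hG0 ▸ ⟨y, rfl⟩
      exact this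
    simp [LinearMap.mem_ker, LinearMap.liftBaseChange_tmul, h1]
  have hSd0 : ∀ (t : C.X 1 ⊗[Q] G.X 0) (y : G.X 2),
      (SyzCx C G mG).d 0 (t, y) = TensorProduct.lift (smB C G mG 0) t - G.d 1 y :=
    fun t y => rfl
  have hSdsucc : ∀ (j : ℕ) (t : C.X (j+2) ⊗[Q] G.X 0) (y : G.X (j+3)),
      (SyzCx C G mG).d (j+1) (t, y) =
        ((C.d (j+1)).rTensor (G.X 0) t,
          TensorProduct.lift (smB C G mG (j+1)) t - G.d (j+2) y) :=
    fun j t y => rfl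
  have hEC : ∀ j : ℕ, Function.Exact ((C.d (j+2)).rTensor (G.X 0))
      ((C.d (j+1)).rTensor (G.X 0)) := fun j =>
    Module.Flat.rTensor_exact (G.X 0) (LinearMap.exact_iff.mpr (hCpos (j+1)).symm)
  have hE0' : Function.Exact (C.d 1) ((e0 : C.X 0 →ₗ[Q] Q) ∘ₗ C.d 0) := by
    rw [LinearMap.exact_iff]
    have hk : LinearMap.ker ((e0 : C.X 0 →ₗ[Q] Q) ∘ₗ C.d 0) = LinearMap.ker (C.d 0) := by
      ext x
      simp [LinearMap.mem_ker, LinearEquiv.map_eq_zero_iff]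
    rw [hk, ← hCpos 0]
  have hE0 : Function.Exact ((C.d 1).rTensor (G.X 0))
      (((e0 : C.X 0 →ₗ[Q] Q) ∘ₗ C.d 0).rTensor (G.X 0)) :=
    Module.Flat.rTensor_exact (G.X 0) hE0'
  have hεd0 : ∀ x : C.X 1, Ideal.Quotient.mk I (e0 (C.d 0 x)) = 0 := by
    intro x
    have hx : C.d 0 x ∈ LinearMap.ker ε := hC0 ▸ ⟨x, rfl⟩
    rw [← hcompat]; exact hx
  have hνI : ∀ t : C.X 1 ⊗[Q] G.X 0,
      (1 : Q ⧸ I) ⊗ₜ[Q] (G.d 0 (TensorProduct.lift (smB C G mG 0) t)) = 0 := by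
    intro t
    induction t using TensorProduct.induction_on with
    | zero => simp
    | tmul x g =>
        rw [TensorProduct.lift.tmul, star_eq e0 hmA hmG x g, TensorProduct.tmul_smul,
          TensorProduct.smul_tmul']
        have h1 : (e0 (C.d 0 x)) • (1 : Q ⧸ I) = 0 := by
          rw [← Algebra.algebraMap_eq_smul_one, Ideal.Quotient.algebraMap_eq]
          exact hεd0 x
        rw [h1, TensorProduct.zero_tmul]
    | add a b ha hb =>
        rw [map_add, map_add, TensorProduct.tmul_add, ha, hb, add_zero]
  have hcpx : (SyzCx C G mG).IsComplex := by
    intro n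
    cases n with
    | zero =>
        apply LinearMap.ext
        rintro ⟨t, y⟩
        erw [LinearMap.comp_apply, hSdsucc 0 t y, hSd0, ← dPhiSucc e0 hmA hmG 0 t]
        show G.d 1 (TensorProduct.lift (smB C G mG 1) t) -
            (G.d 1) (TensorProduct.lift (smB C G mG 1) t - G.d 2 y) = _
        rw [map_sub, hGdd 1 y]
        simp
        rfl
    | succ j =>
        apply LinearMap.ext
        rintro ⟨t, y⟩
        erw [LinearMap.comp_apply, hSdsucc (j+1) t y, hSdsucc j]
        have h1 : (C.d (j+1)).rTensor (G.X 0) ((C.d (j+2)).rTensor (G.X 0) t) = 0 := by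
          rw [← LinearMap.comp_apply, ← LinearMap.rTensor_comp, hCc (j+1)]
          simp
        have h2 : TensorProduct.lift (smB C G mG (j+1)) ((C.d (j+2)).rTensor (G.X 0) t)
            - G.d (j+2) (TensorProduct.lift (smB C G mG (j+2)) t - G.d (j+3) y) = 0 := by
          rw [← dPhiSucc e0 hmA hmG (j+1) t]
          show G.d (j+2) (TensorProduct.lift (smB C G mG (j+2)) t) -
              (G.d (j+2)) (TensorProduct.lift (smB C G mG (j+2)) t - G.d (j+3) y) = _
          rw [map_sub, hGdd (j+2) y]
          simp
        erw [LinearMap.zero_apply]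
        exact Prod.ext h1 h2
  refine ⟨{ toFun := fun y => ⟨(1 : Q ⧸ I) ⊗ₜ[Q] (G.d 0 y), hker y⟩
            map_add' := fun a b => Subtype.ext ((congrArg (fun z => (1 : Q ⧸ I) ⊗ₜ[Q] z) ((G.d 0).map_add a b)).trans (TensorProduct.tmul_add _ _ _))
            map_smul' := fun q y => Subtype.ext (by
              simp only [map_smul, RingHom.id_apply, Submodule.coe_smul_of_tower]
              exact (congrArg (fun z => (1 : Q ⧸ I) ⊗ₜ[Q] z) ((G.d 0).map_smul q y)).trans (TensorProduct.tmul_smul _ _ _)) },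
        fun y => rfl, ⟨?_, ?_, ?_, ?_⟩, ?_⟩
  case _ => exact hcpx
  case _ => -- Surjective
    intro z
    have hall : ∀ w : (Q ⧸ I) ⊗[Q] G.X 0, ∃ g : G.X 0, (1 : Q ⧸ I) ⊗ₜ[Q] g = w := by
      intro w
      induction w using TensorProduct.induction_on with
      | zero => exact ⟨0, by simp⟩
      | tmul r g =>
          obtain ⟨q, rfl⟩ := Ideal.Quotient.mk_surjective r
          refine ⟨q • g, ?_⟩
          rw [TensorProduct.tmul_smul, TensorProduct.smul_tmul',
            ← Algebra.algebraMap_eq_smul_one, Ideal.Quotient.algebraMap_eq]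
      | add a b ha hb =>
          obtain ⟨g1, h1⟩ := ha
          obtain ⟨g2, h2⟩ := hb
          exact ⟨g1 + g2, by rw [TensorProduct.tmul_add, h1, h2]⟩
    obtain ⟨g, hg⟩ := hall z.1
    have hεGg : εG g = 0 := by
      have hz := z.2
      rw [LinearMap.mem_ker, ← hg] at hz
      simpa [LinearMap.liftBaseChange_tmul] using hz
    have : g ∈ LinearMap.range (G.d 0) := by rw [hG0]; exact hεGg
    obtain ⟨y, hy⟩ := this
    exact ⟨y, Subtype.ext (by rw [← hy] at hg; exact hg)⟩
  case _ => -- range d0 = ker εS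
    apply le_antisymm
    · rintro v ⟨⟨t, y⟩, rfl⟩
      rw [LinearMap.mem_ker]
      apply Subtype.ext
      show (1 : Q ⧸ I) ⊗ₜ[Q] (G.d 0 ((SyzCx C G mG).d 0 (t, y))) = _
      rw [hSd0, map_sub, TensorProduct.tmul_sub, hνI t, hGdd 0 y]
      simp
    · intro y hy
      rw [LinearMap.mem_ker] at hy
      change G.X 1 at y
      have hy' : (1 : Q ⧸ I) ⊗ₜ[Q] (G.d 0 y) = 0 := congrArg Subtype.val hy
      have hm : (Algebra.linearMap Q (Q ⧸ I)).rTensor (G.X 0) ((1 : Q) ⊗ₜ[Q] G.d 0 y) = 0 := by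
        rw [LinearMap.rTensor_tmul]
        simpa [Algebra.linearMap_apply] using hy'
      have hexI : Function.Exact I.subtype (Algebra.linearMap Q (Q ⧸ I)) := by
        rw [LinearMap.exact_iff]
        ext x
        simp [LinearMap.mem_ker, Algebra.linearMap_apply, Ideal.Quotient.algebraMap_eq,
          Ideal.Quotient.eq_zero_iff_mem, Submodule.range_subtype]
      obtain ⟨s, hs⟩ := (rTensor_exact (G.X 0) hexI Ideal.Quotient.mk_surjective _).mp hm
      have hmemlem : ∀ s : (↥I) ⊗[Q] (G.X 0),
          TensorProduct.lid Q (G.X 0) ((I.subtype.rTensor (G.X 0)) s)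
            ∈ I • (⊤ : Submodule Q (G.X 0)) := by
        intro s
        induction s using TensorProduct.induction_on with
        | zero => simp
        | tmul i g =>
            rw [LinearMap.rTensor_tmul, TensorProduct.lid_tmul]
            exact Submodule.smul_mem_smul i.2 trivial
        | add a b ha hb =>
            rw [map_add, map_add]
            exact Submodule.add_mem _ ha hb
      have hd0mem : G.d 0 y ∈ I • (⊤ : Submodule Q (G.X 0)) := by
        have heq : G.d 0 y = TensorProduct.lid Q (G.X 0) ((I.subtype.rTensor (G.X 0)) s) := by
          rw [hs, TensorProduct.lid_tmul, one_smul]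
        rw [heq]
        exact hmemlem s
      have hsurjν : ∀ w ∈ I • (⊤ : Submodule Q (G.X 0)), ∃ t : C.X 1 ⊗[Q] G.X 0,
          G.d 0 (TensorProduct.lift (smB C G mG 0) t) = w := by
        intro w hw
        refine Submodule.smul_induction_on hw ?_ ?_
        · intro r hr g _
          have h1 : e0.symm r ∈ LinearMap.ker ε := by
            rw [LinearMap.mem_ker, hcompat, LinearEquiv.apply_symm_apply]
            exact Ideal.Quotient.eq_zero_iff_mem.mpr hr
          rw [← hC0] at h1
          obtain ⟨x, hx⟩ := h1
          refine ⟨x ⊗ₜ[Q] g, ?_⟩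
          rw [TensorProduct.lift.tmul, star_eq e0 hmA hmG x g, hx,
            LinearEquiv.apply_symm_apply]
        · rintro w1 w2 ⟨t1, h1⟩ ⟨t2, h2⟩
          exact ⟨t1 + t2, by rw [map_add, map_add, h1, h2]⟩
      obtain ⟨t, ht⟩ := hsurjν _ hd0mem
      have hk : y - TensorProduct.lift (smB C G mG 0) t ∈ LinearMap.ker (G.d 0) := by
        rw [LinearMap.mem_ker, map_sub, ht, sub_self]
      rw [← hGpos 0] at hk
      obtain ⟨y', hy2⟩ := hk
      refine ⟨(t, -y'), ?_⟩
      rw [hSd0, map_neg, sub_neg_eq_add, hy2]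
      abel
  case _ => -- higher exactness
    intro n
    apply le_antisymm
    · rintro v ⟨w, rfl⟩
      rw [LinearMap.mem_ker, ← LinearMap.comp_apply]
      have hc := hcpx n
      rw [hc, LinearMap.zero_apply]
    · cases n with
      | zero =>
          rintro ⟨t, y⟩ h
          erw [LinearMap.mem_ker, hSd0] at h
          have hl : TensorProduct.lift (smB C G mG 0) t = G.d 1 y := sub_eq_zero.mp h
          have h2 : (((e0 : C.X 0 →ₗ[Q] Q) ∘ₗ C.d 0).rTensor (G.X 0)) t = 0 := by
            apply (TensorProduct.lid Q (G.X 0)).injective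
            rw [map_zero, ← dPhi0 e0 hmA hmG t, hl, hGdd 0 y]
          obtain ⟨t', ht'⟩ := (hE0 t).mp h2
          have h3 : G.d 1 (TensorProduct.lift (smB C G mG 1) t') = G.d 1 y := by
            rw [dPhiSucc e0 hmA hmG 0 t', ht', hl]
          have h4 : TensorProduct.lift (smB C G mG 1) t' - y ∈ LinearMap.ker (G.d 1) := by
            rw [LinearMap.mem_ker, map_sub, h3, sub_self]
          rw [← hGpos 1] at h4
          obtain ⟨y'', hy''⟩ := h4
          refine ⟨(t', y''), ?_⟩
          rw [hSdsucc 0 t' y'', hy'']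
          exact Prod.ext ht' (sub_sub_cancel _ _)
      | succ j =>
          rintro ⟨t, y⟩ h
          erw [LinearMap.mem_ker, hSdsucc j t y] at h
          replace h := Prod.ext_iff.mp h
          obtain ⟨h1, h2⟩ := h
          obtain ⟨t', ht'⟩ := (hEC j t).mp h1
          have h3 : G.d (j+2) (TensorProduct.lift (smB C G mG (j+2)) t') = G.d (j+2) y := by
            rw [dPhiSucc e0 hmA hmG (j+1) t', ht']
            exact sub_eq_zero.mp h2
          have h4 : TensorProduct.lift (smB C G mG (j+2)) t' - y
              ∈ LinearMap.ker (G.d (j+2)) := by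
            rw [LinearMap.mem_ker, map_sub, h3, sub_self]
          rw [← hGpos (j+2)] at h4
          obtain ⟨y'', hy''⟩ := h4
          refine ⟨(t', y''), ?_⟩
          rw [hSdsucc (j+1) t' y'', hy'']
          exact Prod.ext ht' (sub_sub_cancel _ _)
  case _ => -- projectivity
    intro n
    cases n with
    | zero => exact hGproj 1
    | succ j =>
        haveI h1 := hCproj (j+1)
        haveI h2 := hGproj (j+2)
        exact inferInstanceAs (Module.Projective Q ((C.X (j+1) ⊗[Q] G.X 0) × G.X (j+2)))


end Golod
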